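/- Under the standing assumptions (positive symmetric density and strictly increasing hazard ratio F/f), the function x ↦ (2F(x) − 1)/f(x) is strictly increasing on ℝ. -/

import Mathlib

/-- Under the standing assumptions (positive symmetric
density and strictly increasing hazard ratio `F/f`), the function
`x ↦ (2 F x − 1)/f x` is strictly increasing on `ℝ`. -/
theorem two_cdf_sub_one_div_density_strictMono (F f : ℝ → ℝ)
    (hF_deriv : ∀ x, HasDerivAt F (f x) x)
    (hf_cont : Continuous f)
    (hf_pos : ∀ x, 0 < f x)
    (hf_symm : ∀ x, f (-x) = f x)
    (hF_mono : Monotone F)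
    (hF_bot : Filter.Tendsto F Filter.atBot (nhds 0))
    (hF_top : Filter.Tendsto F Filter.atTop (nhds 1))
    (hMHR : StrictMono (fun x => F x / f x)) :
    StrictMono (fun x => (2 * F x - 1) / f x) := by
  -- h x = F x + F (-x) has zero derivative, hence is constant
  have hderiv : ∀ x : ℝ, HasDerivAt (fun x => F x + F (-x)) 0 x := by
    intro x
    have h1 := hF_deriv x
    have h2 : HasDerivAt (fun x : ℝ => F (-x)) (-(f (-x))) x := by
      have := (hF_deriv (-x)).comp x (hasDerivAt_neg x)
      rw [mul_neg_one] at this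
      exact this
    have := h1.add h2
    rw [hf_symm x, add_neg_cancel] at this
    exact this
  have hconst : ∀ x y : ℝ, F x + F (-x) = F y + F (-y) := by
    intro x y
    exact is_const_of_deriv_eq_zero
      (fun z => (hderiv z).differentiableAt)
      (fun z => (hderiv z).deriv) x y
  -- the constant is 1
  have hlim : Filter.Tendsto (fun x => F x + F (-x)) Filter.atTop (nhds 1) := by
    have : Filter.Tendsto (fun x : ℝ => F (-x)) Filter.atTop (nhds 0) :=
      hF_bot.comp Filter.tendsto_neg_atTop_atBot
    simpa using hF_top.add this
  have hsum : ∀ x : ℝ, F x + F (-x) = 1 := by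
    intro x
    have : Filter.Tendsto (fun y : ℝ => F x + F (-x)) Filter.atTop
        (nhds (F x + F (-x))) := tendsto_const_nhds
    have := tendsto_nhds_unique (this.congr (fun y => hconst x y)) hlim
    exact this
  -- rewrite the target function
  have key : ∀ x : ℝ, (2 * F x - 1) / f x = F x / f x - F (-x) / f (-x) := by
    intro x
    rw [hf_symm x, ← sub_div]
    congr 1
    have := hsum x
    linarith
  intro a b hab
  simp only [key a, key b]
  have h1 : F a / f a < F b / f b := hMHR hab
  have h2 : F (-b) / f (-b) < F (-a) / f (-a) := hMHR (by linarith : -b < -a)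
  linarith
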